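/- arXiv:0705.4124 — 3 statements merged into one kernel-verified Lean document; each statement's English description precedes it below -/
import Mathlib

section
/- If a measure μ linearly majorizes a measure ν on the sphere S^{N-1}, then ∫ p dμ ≥ ∫ p dν for every sublinear (positively homogeneous, subadditive, continuous) function p on ℝ^N restricted to S^{N-1} (Reshetnyak's theorem, sufficiency direction). -/
open MeasureTheory

/-- The unit sphere in `ℝ^N`. -/
abbrev Sph (N : ℕ) := Metric.sphere (0 : EuclideanSpace ℝ (Fin N)) 1

/-- `μ` linearly majorizes `ν` (Reshetnyak): for every finite Borel partition of the sphere
there is a decomposition of `μ` whose pieces match `ν` on restrictions of linear functionals. -/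
def LinMaj {N : ℕ} (μ ν : Measure (Sph N)) : Prop :=
  ∀ (m : ℕ) (U : Fin m → Set (Sph N)),
    (∀ k, MeasurableSet (U k)) → Pairwise (Function.onFun Disjoint U) →
    (⋃ k, U k) = Set.univ →
    ∃ μs : Fin m → Measure (Sph N), (∑ k, μs k) = μ ∧
      ∀ k (a : EuclideanSpace ℝ (Fin N)),
        ∫ z, (inner ℝ a (z : EuclideanSpace ℝ (Fin N)) : ℝ) ∂(μs k) =
        ∫ z in U k, (inner ℝ a (z : EuclideanSpace ℝ (Fin N)) : ℝ) ∂ν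

/-- Hahn–Banach support: a continuous sublinear functional is supported at every nonzero
point by a linear functional (represented by an inner product). -/
lemma reshetnyak_support {N : ℕ} (p : EuclideanSpace ℝ (Fin N) → ℝ)
    (hph : ∀ c : ℝ, 0 ≤ c → ∀ x, p (c • x) = c * p x)
    (hps : ∀ x y, p (x + y) ≤ p x + p y)
    (z₀ : EuclideanSpace ℝ (Fin N)) (hz : z₀ ≠ 0) :
    ∃ a : EuclideanSpace ℝ (Fin N),
      (∀ x, (inner ℝ a x : ℝ) ≤ p x) ∧ (inner ℝ a z₀ : ℝ) = p z₀ := by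
  have p0 : p 0 = 0 := by simpa using hph 0 le_rfl 0
  have hsum : 0 ≤ p z₀ + p (-z₀) := by
    have := hps z₀ (-z₀)
    simpa [p0] using this
  set f := LinearPMap.mkSpanSingleton (K := ℝ) (L := ℝ) (σ := RingHom.id ℝ) z₀ (p z₀) hz with hf_def
  have hdom : ∀ x : f.domain, f x ≤ p x := by
    rintro ⟨x, hx⟩
    obtain ⟨c, rfl⟩ := Submodule.mem_span_singleton.mp hx
    have happ : f ⟨c • z₀, hx⟩ = c • p z₀ :=
      LinearPMap.mkSpanSingleton'_apply _ _ _ c hx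
    have hgoal : c • p z₀ ≤ p (c • z₀) := by
      rcases le_or_gt 0 c with hc | hc
      · rw [hph c hc, smul_eq_mul]
      · have h1 : p (c • z₀) = (-c) * p (-z₀) := by
          rw [← hph (-c) (by linarith) (-z₀), neg_smul_neg]
        rw [smul_eq_mul, h1]
        nlinarith
    simpa [happ] using hgoal
  obtain ⟨g, hg1, hg2⟩ :=
    exists_extension_of_le_sublinear f p (fun c hc x => hph c hc.le x) hps hdom
  refine ⟨(InnerProductSpace.toDual ℝ _).symm (LinearMap.toContinuousLinearMap g), ?_, ?_⟩
  · intro x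
    rw [InnerProductSpace.toDual_symm_apply]
    simpa using hg2 x
  · rw [InnerProductSpace.toDual_symm_apply]
    have hmem : z₀ ∈ f.domain := Submodule.mem_span_singleton_self z₀
    have h1 := hg1 ⟨z₀, hmem⟩
    have h2 : f ⟨z₀, hmem⟩ = p z₀ := LinearPMap.mkSpanSingleton_apply ℝ ℝ hz (p z₀)
    simpa [h2] using h1

/-- Continuous functions on the sphere are integrable for finite measures. -/
lemma reshetnyak_integrable {N : ℕ} (ρ : Measure (Sph N)) [IsFiniteMeasure ρ]
    {f : Sph N → ℝ} (hf : Continuous f) : Integrable f ρ := by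
  have := hf.continuousOn.integrableOn_compact (μ := ρ) isCompact_univ
  rwa [integrableOn_univ] at this

theorem reshetnyak_sufficiency {N : ℕ} (μ ν : Measure (Sph N))
    [IsFiniteMeasure μ] [IsFiniteMeasure ν] (h : LinMaj μ ν)
    (p : EuclideanSpace ℝ (Fin N) → ℝ) (hpc : Continuous p)
    (hph : ∀ c : ℝ, 0 ≤ c → ∀ x, p (c • x) = c * p x)
    (hps : ∀ x y, p (x + y) ≤ p x + p y) :
    ∫ z, p (z : EuclideanSpace ℝ (Fin N)) ∂ν ≤ ∫ z, p (z : EuclideanSpace ℝ (Fin N)) ∂μ := by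
  classical
  -- choose supporting functionals
  have hz : ∀ s : Sph N, (s : EuclideanSpace ℝ (Fin N)) ≠ 0 := by
    intro s hs
    have := s.2
    rw [mem_sphere_zero_iff_norm, hs] at this
    simp at this
  choose a ha1 ha2 using fun s : Sph N =>
    reshetnyak_support p hph hps (s : EuclideanSpace ℝ (Fin N)) (hz s)
  have pc : Continuous fun z : Sph N => p (z : EuclideanSpace ℝ (Fin N)) :=
    hpc.comp continuous_subtype_val
  have gc : ∀ s : Sph N,
      Continuous fun z : Sph N => (inner ℝ (a s) (z : EuclideanSpace ℝ (Fin N)) : ℝ) :=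
    fun s => Continuous.inner continuous_const continuous_subtype_val
  -- main epsilon estimate
  have claim : ∀ ε : ℝ, 0 < ε →
      (∫ z, p (z : EuclideanSpace ℝ (Fin N)) ∂ν) - ε * (ν Set.univ).toReal ≤
      ∫ z, p (z : EuclideanSpace ℝ (Fin N)) ∂μ := by
    intro ε hε
    set W : Sph N → Set (Sph N) :=
      fun s => {z : Sph N | p (z : EuclideanSpace ℝ (Fin N)) -
        (inner ℝ (a s) (z : EuclideanSpace ℝ (Fin N)) : ℝ) < ε} with hW
    have hWopen : ∀ s, IsOpen (W s) := fun s =>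
      isOpen_lt (by exact (pc.sub (gc s))) continuous_const
    have hWmem : ∀ s : Sph N, s ∈ W s := by
      intro s
      simp only [hW, Set.mem_setOf_eq, ha2 s, sub_self]
      exact hε
    obtain ⟨t, ht⟩ := isCompact_univ.elim_finite_subcover W hWopen
      (fun z _ => Set.mem_iUnion.2 ⟨z, hWmem z⟩)
    set m := t.card with hm
    set e := t.equivFin with he
    set V : ℕ → Set (Sph N) :=
      fun n => if hn : n < m then W ((e.symm ⟨n, hn⟩ : t) : Sph N) else ∅ with hV
    set U : Fin m → Set (Sph N) := fun k => disjointed V k with hU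
    have hVmeas : ∀ n, MeasurableSet (V n) := by
      intro n
      by_cases hn : n < m
      · simpa [hV, hn] using (hWopen _).measurableSet
      · simp [hV, hn]
    have hUmeas : ∀ k, MeasurableSet (U k) :=
      fun k => MeasurableSet.disjointed hVmeas k
    have hUdisj : Pairwise (Function.onFun Disjoint U) := by
      intro i j hij
      exact disjoint_disjointed V (fun hc => hij (Fin.ext hc))
    have hUsub : ∀ k : Fin m, U k ⊆ W ((e.symm k : t) : Sph N) := by
      intro k
      have hk : (k : ℕ) < m := k.is_lt
      refine (disjointed_subset V k).trans ?_
      simp [hV, hk]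
    have hUunion : (⋃ k, U k) = Set.univ := by
      refine Set.eq_univ_of_univ_subset ?_
      intro z _
      have hzW : z ∈ ⋃ n, V n := by
        obtain ⟨s, hst, hzs⟩ := Set.mem_iUnion₂.mp (ht (Set.mem_univ z))
        refine Set.mem_iUnion.2 ⟨(e ⟨s, hst⟩ : Fin m), ?_⟩
        have hlt : ((e ⟨s, hst⟩ : Fin m) : ℕ) < m := (e ⟨s, hst⟩).is_lt
        simpa [hV, hlt] using hzs
      rw [← iUnion_disjointed] at hzW
      obtain ⟨n, hn⟩ := Set.mem_iUnion.mp hzW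
      have hnm : n < m := by
        by_contra hnm
        have hzV : z ∈ V n := disjointed_subset V n hn
        simp [hV, hnm] at hzV
      exact Set.mem_iUnion.2 ⟨⟨n, hnm⟩, hn⟩
    obtain ⟨μs, hμsum, hμint⟩ := h m U hUmeas hUdisj hUunion
    haveI : ∀ k, IsFiniteMeasure (μs k) := by
      intro k
      refine ⟨?_⟩
      have h1 : (μs k) Set.univ ≤ (∑ i, μs i) Set.univ := by
        rw [Measure.finset_sum_apply]
        exact Finset.single_le_sum (f := fun i => (μs i) Set.univ) (fun i _ => zero_le) (Finset.mem_univ k)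
      rw [hμsum] at h1
      exact lt_of_le_of_lt h1 (measure_lt_top μ _)
    set q : Sph N → ℝ := fun z => p (z : EuclideanSpace ℝ (Fin N)) - ε with hq
    have qc : Continuous q := pc.sub continuous_const
    have step1 : (∫ z, p (z : EuclideanSpace ℝ (Fin N)) ∂ν) - ε * (ν Set.univ).toReal =
        ∫ z, q z ∂ν := by
      rw [hq, integral_sub (reshetnyak_integrable ν pc) (integrable_const ε),
        integral_const, smul_eq_mul, mul_comm, measureReal_def]
    have step2 : (∫ z, q z ∂ν) = ∑ k, ∫ z in U k, q z ∂ν := by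
      rw [← setIntegral_univ (f := q), ← hUunion]
      exact integral_iUnion_fintype hUmeas hUdisj
        (fun k => (reshetnyak_integrable ν qc).integrableOn)
    have step3 : (∑ k, ∫ z in U k, q z ∂ν) ≤
        ∑ k, ∫ z in U k, (inner ℝ (a ((e.symm k : t) : Sph N))
          (z : EuclideanSpace ℝ (Fin N)) : ℝ) ∂ν := by
      refine Finset.sum_le_sum fun k _ => ?_
      refine setIntegral_mono_on (reshetnyak_integrable ν qc).integrableOn
        ((reshetnyak_integrable ν (gc _)).integrableOn) (hUmeas k) ?_
      intro z hzU
      have hzW := hUsub k hzU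
      simp only [hW, Set.mem_setOf_eq] at hzW
      simp only [hq]
      linarith
    have step4 : (∑ k, ∫ z in U k, (inner ℝ (a ((e.symm k : t) : Sph N))
          (z : EuclideanSpace ℝ (Fin N)) : ℝ) ∂ν) =
        ∑ k, ∫ z, (inner ℝ (a ((e.symm k : t) : Sph N))
          (z : EuclideanSpace ℝ (Fin N)) : ℝ) ∂(μs k) := by
      refine Finset.sum_congr rfl fun k _ => ?_
      exact (hμint k (a ((e.symm k : t) : Sph N))).symm
    have step5 : (∑ k, ∫ z, (inner ℝ (a ((e.symm k : t) : Sph N))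
          (z : EuclideanSpace ℝ (Fin N)) : ℝ) ∂(μs k)) ≤
        ∑ k, ∫ z, p (z : EuclideanSpace ℝ (Fin N)) ∂(μs k) := by
      refine Finset.sum_le_sum fun k _ => ?_
      exact integral_mono (reshetnyak_integrable (μs k) (gc _))
        (reshetnyak_integrable (μs k) pc) (fun z => ha1 _ _)
    have step6 : (∑ k, ∫ z, p (z : EuclideanSpace ℝ (Fin N)) ∂(μs k)) =
        ∫ z, p (z : EuclideanSpace ℝ (Fin N)) ∂μ := by
      rw [← hμsum]
      exact (integral_finset_sum_measure fun k _ => reshetnyak_integrable (μs k) pc).symm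
    calc (∫ z, p (z : EuclideanSpace ℝ (Fin N)) ∂ν) - ε * (ν Set.univ).toReal
        = ∑ k, ∫ z in U k, q z ∂ν := by rw [step1, step2]
      _ ≤ _ := step3
      _ = _ := step4
      _ ≤ _ := step5
      _ = _ := step6
  -- conclude
  refine le_of_forall_sub_le fun ε hε => ?_
  set C := (ν Set.univ).toReal with hC
  have hC0 : 0 ≤ C := ENNReal.toReal_nonneg
  have hε' : 0 < ε / (C + 1) := by positivity
  have key := claim (ε / (C + 1)) hε'
  have hle : ε / (C + 1) * C ≤ ε := by
    rw [div_mul_eq_mul_div, div_le_iff₀ (by linarith)]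
    nlinarith
  linarith
end

section
/- If a measure μ affinely majorizes a measure ν on a compact convex subset Q of a locally convex space, then ∫_Q f dμ ≥ ∫_Q f dν for every continuous convex function f on Q (Cartier–Fell–Meyer theorem, sufficiency direction). -/
open MeasureTheory

/-- `μ` affinely majorizes `ν` (Loomis): for every finite decomposition of `ν` into positive
summands there is a matching decomposition of `μ` whose pieces agree with those of `ν`
against all continuous affine functions. -/
def AffMaj {X : Type*} [AddCommGroup X] [Module ℝ X] [TopologicalSpace X] [MeasurableSpace X]
    (μ ν : Measure X) : Prop :=
  ∀ (m : ℕ) (νs : Fin m → Measure X), (∑ k, νs k) = ν →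
    ∃ μs : Fin m → Measure X, (∑ k, μs k) = μ ∧
      ∀ k (a : X →L[ℝ] ℝ) (c : ℝ),
        ∫ x, (a x + c) ∂(μs k) = ∫ x, (a x + c) ∂(νs k)

open Set Filter Topology

lemma cfm_exists_convex_nbhd {X : Type*} [AddCommGroup X] [Module ℝ X]
    [TopologicalSpace X] [IsTopologicalAddGroup X] [ContinuousSMul ℝ X]
    [LocallyConvexSpace ℝ X]
    {Q : Set X} {f : X → ℝ} (hfc : ContinuousOn f Q)
    {q : X} (hq : q ∈ Q) {ε : ℝ} (hε : 0 < ε) :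
    ∃ O C : Set X, IsOpen O ∧ q ∈ O ∧ O ⊆ C ∧ Convex ℝ C ∧ IsClosed C ∧
      ∀ y ∈ C ∩ Q, |f y - f q| < ε := by
  have hcw : ContinuousWithinAt f Q q := hfc q hq
  have hev : ∀ᶠ y in 𝓝[Q] q, |f y - f q| < ε := by
    have h1 := hcw (Metric.ball_mem_nhds (f q) hε)
    filter_upwards [h1] with y hy
    simpa [Real.dist_eq] using hy
  obtain ⟨W, hWo, hqW, hWsub⟩ := mem_nhdsWithin.mp hev
  set N : Set X := (fun v => q + v) ⁻¹' W with hN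
  have hNo : IsOpen N := hWo.preimage (continuous_const.add continuous_id)
  have hN0 : (0 : X) ∈ N := by simp [hN, hqW]
  obtain ⟨V1, hV1, hV1half⟩ := exists_nhds_zero_half (hNo.mem_nhds hN0)
  obtain ⟨D0, ⟨hD0n, hD0c⟩, hD0sub⟩ :=
    (LocallyConvexSpace.convex_basis_zero ℝ X).mem_iff.mp hV1
  refine ⟨(fun y => y - q) ⁻¹' interior D0, (fun y => y - q) ⁻¹' closure D0, ?_, ?_, ?_, ?_, ?_, ?_⟩
  · exact isOpen_interior.preimage (continuous_id.sub continuous_const)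
  · simp only [Set.mem_preimage, sub_self]
    exact mem_interior_iff_mem_nhds.mpr hD0n
  · exact preimage_mono (interior_subset.trans subset_closure)
  · intro y1 h1 y2 h2 a b ha hb hab
    have hmem := hD0c.closure h1 h2 ha hb hab
    have key : a • y1 + b • y2 - q = a • (y1 - q) + b • (y2 - q) := by
      have hq' : a • q + b • q = q := by rw [← add_smul, hab, one_smul]
      calc a • y1 + b • y2 - q = a • y1 + b • y2 - (a • q + b • q) := by rw [hq']
        _ = a • (y1 - q) + b • (y2 - q) := by rw [smul_sub, smul_sub]; abel
    show a • y1 + b • y2 - q ∈ closure D0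
    rw [key]; exact hmem
  · exact isClosed_closure.preimage (continuous_id.sub continuous_const)
  · rintro y ⟨hyC, hyQ⟩
    have hmem : y - q ∈ closure D0 := hyC
    have hnb : (fun z => (y - q) - z) ⁻¹' V1 ∈ 𝓝 (y - q) := by
      refine ContinuousAt.preimage_mem_nhds (Continuous.continuousAt (by fun_prop)) ?_
      simpa using hV1
    obtain ⟨d, hdnb, hdD0⟩ := (mem_closure_iff_nhds.mp hmem _ hnb)
    have hyN : y - q ∈ N := by
      have := hV1half d (hD0sub hdD0) ((y - q) - d) hdnb
      simpa using this
    have hyW : y ∈ W := by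
      have h2 : q + (y - q) ∈ W := hyN
      rwa [add_sub_cancel] at h2
    exact hWsub ⟨hyW, hyQ⟩

lemma cfm_affine_minorant {X : Type*} [AddCommGroup X] [Module ℝ X]
    [TopologicalSpace X] [IsTopologicalAddGroup X] [ContinuousSMul ℝ X]
    [LocallyConvexSpace ℝ X]
    {Q : Set X} (hQcp : IsCompact Q) (hQcv : Convex ℝ Q)
    {f : X → ℝ} (hfc : ContinuousOn f Q) (hfcv : ConvexOn ℝ Q f)
    {x0 : X} (hx0 : x0 ∈ Q) {δ : ℝ} (hδ : 0 < δ) :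
    ∃ (a : X →L[ℝ] ℝ) (c : ℝ), (∀ y ∈ Q, a y + c ≤ f y) ∧ f x0 - δ ≤ a x0 + c := by
  obtain ⟨z, hzQ, hzmax⟩ := hQcp.exists_isMaxOn ⟨x0, hx0⟩ hfc
  set M := f z with hMdef
  have hfM : ∀ y ∈ Q, f y ≤ M := fun y hy => hzmax hy
  have hMx0 : f x0 ≤ M := hfM x0 hx0
  set S : Set (X × ℝ) := {p | p.1 ∈ Q ∧ f p.1 ≤ p.2 ∧ p.2 ≤ M} with hSdef
  have hScv : Convex ℝ S := by
    intro p hp q hq α β hα hβ hαβ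
    obtain ⟨hp1, hp2, hp3⟩ := hp
    obtain ⟨hq1, hq2, hq3⟩ := hq
    have h1 : (α • p + β • q).1 = α • p.1 + β • q.1 := rfl
    have h2 : (α • p + β • q).2 = α * p.2 + β * q.2 := rfl
    refine ⟨?_, ?_, ?_⟩
    · rw [h1]; exact hQcv hp1 hq1 hα hβ hαβ
    · rw [h1, h2]
      have h3 := hfcv.2 hp1 hq1 hα hβ hαβ
      rw [smul_eq_mul, smul_eq_mul] at h3
      nlinarith [mul_le_mul_of_nonneg_left hp2 hα, mul_le_mul_of_nonneg_left hq2 hβ]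
    · rw [h2]
      have hM1 : α * M + β * M = M := by rw [← add_mul, hαβ, one_mul]
      nlinarith [mul_le_mul_of_nonneg_left hp3 hα, mul_le_mul_of_nonneg_left hq3 hβ]
  -- compactness of S
  set g : X × ℝ → X × ℝ := fun p => (p.1, f p.1 + p.2 * (M - f p.1)) with hgdef
  have hSeq : S = g '' (Q ×ˢ Icc (0:ℝ) 1) := by
    apply Subset.antisymm
    · rintro ⟨x, v⟩ ⟨hx, hfv, hvM⟩
      by_cases hfx : f x = M
      · refine ⟨(x, 0), ⟨hx, by norm_num⟩, ?_⟩
        have hv : v = f x := le_antisymm (hfx ▸ hvM) hfv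
        simp [hgdef, hv]
      · have hlt : f x < M := lt_of_le_of_ne (hfM x hx) hfx
        refine ⟨(x, (v - f x) / (M - f x)),
          ⟨hx, ⟨div_nonneg (by linarith) (by linarith),
            (div_le_one (by linarith)).2 (by linarith)⟩⟩, ?_⟩
        simp only [hgdef]
        rw [div_mul_cancel₀ _ (by intro hc; linarith [sub_eq_zero.mp hc] : M - f x ≠ 0)]
        simp
    · rintro p ⟨⟨x, s⟩, ⟨hx, hs⟩, rfl⟩
      obtain ⟨hs0, hs1⟩ := hs
      have hxM : f x ≤ M := hfM x hx
      refine ⟨hx, ?_, ?_⟩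
      · show f x ≤ f x + s * (M - f x)
        nlinarith
      · show f x + s * (M - f x) ≤ M
        nlinarith
  have hf1 : ContinuousOn (fun p : X × ℝ => f p.1) (Q ×ˢ Icc (0:ℝ) 1) :=
    hfc.comp continuousOn_fst (fun p hp => hp.1)
  have hgcont : ContinuousOn g (Q ×ˢ Icc (0:ℝ) 1) :=
    continuousOn_fst.prodMk
      (hf1.add (continuous_snd.continuousOn.mul (continuousOn_const.sub hf1)))
  have hScp : IsCompact S := by
    rw [hSeq]; exact (hQcp.prod isCompact_Icc).image_of_continuousOn hgcont
  -- the point below the epigraph is not in the closure of S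
  have hp0 : (x0, f x0 - δ) ∉ closure S := by
    intro hmem
    have hev : ∀ᶠ y in 𝓝[Q] x0, f x0 - δ/3 < f y :=
      hfc x0 hx0 (Ioi_mem_nhds (by linarith))
    obtain ⟨W, hWo, hx0W, hWsub⟩ := mem_nhdsWithin.mp hev
    have hNo : IsOpen (W ×ˢ Ioo (f x0 - δ - δ/3) (f x0 - δ + δ/3)) := hWo.prod isOpen_Ioo
    have hp0N : (x0, f x0 - δ) ∈ W ×ˢ Ioo (f x0 - δ - δ/3) (f x0 - δ + δ/3) :=
      ⟨hx0W, by constructor <;> linarith⟩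
    obtain ⟨⟨x, v⟩, ⟨hxW, hvI⟩, hxS⟩ := (mem_closure_iff.mp hmem _ hNo hp0N)
    have h1 : f x0 - δ/3 < f x := hWsub ⟨hxW, hxS.1⟩
    have h2 : f x ≤ v := hxS.2.1
    have h3 := hvI.2
    linarith
  obtain ⟨φ, u, hφS, hφp⟩ :=
    geometric_hahn_banach_closed_point hScv.closure isClosed_closure hp0
  set r : ℝ := φ (0, 1) with hrdef
  set a' : X →L[ℝ] ℝ := φ.comp (ContinuousLinearMap.inl ℝ X ℝ) with ha'def
  have key : ∀ p : X × ℝ, φ p = a' p.1 + p.2 * r := by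
    intro p
    have hps : p = (p.1, (0:ℝ)) + p.2 • ((0:X), (1:ℝ)) := by
      simp [Prod.ext_iff]
    have h4 : φ p = φ (p.1, 0) + p.2 * φ (0, 1) := by
      conv_lhs => rw [hps]
      rw [map_add, ContinuousLinearMap.map_smul, smul_eq_mul]
    rw [h4]
    simp [ha'def, hrdef]
  have hx0S : (x0, f x0) ∈ S := ⟨hx0, le_refl _, hMx0⟩
  have h1 : a' x0 + f x0 * r < u := by
    have := hφS _ (subset_closure hx0S); rwa [key] at this
  have h2 : u < a' x0 + (f x0 - δ) * r := by
    have := hφp; rwa [key] at this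
  have hrneg : r < 0 := by nlinarith
  have hrne : r ≠ 0 := ne_of_lt hrneg
  refine ⟨(-(r⁻¹)) • a', u / r, ?_, ?_⟩
  · intro y hy
    have hyS : (y, f y) ∈ S := ⟨hy, le_refl _, hfM y hy⟩
    have h3 : a' y + f y * r < u := by
      have := hφS _ (subset_closure hyS); rwa [key] at this
    have heq : ((-(r⁻¹)) • a') y + u / r = (u - a' y) / r := by
      simp only [ContinuousLinearMap.smul_apply, smul_eq_mul]
      field_simp
      ring
    rw [heq, div_le_iff_of_neg hrneg]
    linarith
  · have heq : ((-(r⁻¹)) • a') x0 + u / r = (u - a' x0) / r := by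
      simp only [ContinuousLinearMap.smul_apply, smul_eq_mul]
      field_simp
      ring
    rw [heq, le_div_iff_of_neg hrneg]
    linarith

lemma cfm_exists_weak_barycenter {X : Type*} [AddCommGroup X] [Module ℝ X]
    [TopologicalSpace X] [IsTopologicalAddGroup X] [ContinuousSMul ℝ X]
    [MeasurableSpace X] [OpensMeasurableSpace X]
    {K : Set X} (hK : IsCompact K) (hKc : Convex ℝ K)
    (ρ : Measure X) [IsFiniteMeasure ρ] (hρK : ρ Kᶜ = 0) (hρ : ρ ≠ 0) :
    ∃ b ∈ K, ∀ a : X →L[ℝ] ℝ, ∫ x, a x ∂ρ = (ρ Set.univ).toReal * a b := by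
  classical
  have hmem : ∀ᵐ x ∂ρ, x ∈ K := by
    rw [ae_iff]
    simpa [Set.compl_def] using hρK
  have hmass : (ρ Set.univ).toReal ≠ 0 := by
    have h1 : ρ Set.univ ≠ 0 := by simpa [Measure.measure_univ_eq_zero] using hρ
    exact ENNReal.toReal_ne_zero.mpr ⟨h1, measure_ne_top _ _⟩
  set Z : (X →L[ℝ] ℝ) → Set X :=
    fun a => {x | (ρ Set.univ).toReal * a x = ∫ y, a y ∂ρ} with hZdef
  have hZc : ∀ a, IsClosed (Z a) := fun a =>
    isClosed_eq (continuous_const.mul a.continuous) continuous_const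
  have hne : (K ∩ ⋂ a, Z a).Nonempty := by
    by_contra hemp
    rw [Set.not_nonempty_iff_eq_empty] at hemp
    obtain ⟨t, ht⟩ := hK.elim_finite_subfamily_closed Z hZc hemp
    haveI : NeZero ρ := ⟨hρ⟩
    set T : X →L[ℝ] (↥t → ℝ) :=
      ContinuousLinearMap.pi (fun i : t => (i : X →L[ℝ] ℝ)) with hTdef
    have hTi : Integrable (fun x => T x) ρ := by
      obtain ⟨CT, hCT⟩ := hK.exists_bound_of_continuousOn T.continuous.continuousOn
      exact Integrable.mono' (integrable_const CT) T.continuous.aestronglyMeasurable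
        (hmem.mono fun x hx => hCT x hx)
    have hconv : Convex ℝ ((fun x => T x) '' K) := by
      have := hKc.linear_image (T : X →ₗ[ℝ] (↥t → ℝ))
      simpa using this
    have hclosed : IsClosed ((fun x => T x) '' K) := (hK.image T.continuous).isClosed
    have havg : (⨍ x, T x ∂ρ) ∈ (fun x => T x) '' K :=
      hconv.average_mem hclosed (hmem.mono fun x hx => Set.mem_image_of_mem _ hx) hTi
    obtain ⟨b, hbK, hbT⟩ := havg
    have hb : b ∈ K ∩ ⋂ a ∈ t, Z a := by
      refine ⟨hbK, ?_⟩
      simp only [Set.mem_iInter]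
      intro a ha
      have h2 : ∫ x, a x ∂ρ = (∫ x, T x ∂ρ) ⟨a, ha⟩ := by
        have h3 := (ContinuousLinearMap.proj (R := ℝ)
          (φ := fun _ : t => ℝ) (⟨a, ha⟩ : t)).integral_comp_comm hTi
        simpa [hTdef, ContinuousLinearMap.proj_apply] using h3
      have h4 : a b = ((ρ Set.univ).toReal)⁻¹ * ∫ x, a x ∂ρ := by
        have h5 : T b = ⨍ x, T x ∂ρ := hbT
        rw [average_eq] at h5
        have h6 := congrFun h5 ⟨a, ha⟩
        simpa [hTdef, h2, measureReal_def] using h6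
      show (ρ Set.univ).toReal * a b = ∫ y, a y ∂ρ
      rw [h4]
      field_simp
    rw [ht] at hb
    exact absurd hb (Set.notMem_empty b)
  obtain ⟨b, hbK, hbZ⟩ := hne
  exact ⟨b, hbK, fun a => (Set.mem_iInter.mp hbZ a).symm⟩
lemma cfm_estimate {X : Type*} [AddCommGroup X] [Module ℝ X]
    [TopologicalSpace X] [IsTopologicalAddGroup X] [ContinuousSMul ℝ X]
    [LocallyConvexSpace ℝ X] [MeasurableSpace X] [BorelSpace X]
    (Q : Set X) (hQcp : IsCompact Q) (hQcv : Convex ℝ Q)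
    (μ ν : Measure X) [IsFiniteMeasure μ] [IsFiniteMeasure ν]
    (hμQ : μ Qᶜ = 0) (hνQ : ν Qᶜ = 0)
    (h : AffMaj μ ν)
    (f : X → ℝ) (hfc : ContinuousOn f Q) (hfcv : ConvexOn ℝ Q f)
    {ε : ℝ} (hε : 0 < ε) :
    ∫ x, f x ∂ν ≤ ∫ x, f x ∂μ + 3 * ε * (ν Set.univ).toReal := by
  classical
  obtain ⟨E, hQE, hEm, hE0⟩ := exists_measurable_superset_of_null
    (show (μ + ν) Qᶜ = 0 by simp [Measure.add_apply, hμQ, hνQ])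
  rw [Measure.add_apply] at hE0
  have hμE : μ E = 0 := (add_eq_zero.mp hE0).1
  have hνE : ν E = 0 := (add_eq_zero.mp hE0).2
  set D : Set X := Eᶜ with hDdef
  have hD : MeasurableSet D := hEm.compl
  have hDQ : D ⊆ Q := compl_subset_comm.mp hQE
  have hμD : μ Dᶜ = 0 := by simpa [hDdef, compl_compl] using hμE
  have hνD : ν Dᶜ = 0 := by simpa [hDdef, compl_compl] using hνE
  -- choose local data
  have hOC : ∀ q : Q, ∃ O C' : Set X, IsOpen O ∧ (q : X) ∈ O ∧ O ⊆ C' ∧ Convex ℝ C' ∧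
      IsClosed C' ∧ ∀ y ∈ C' ∩ Q, |f y - f q| < ε :=
    fun q => cfm_exists_convex_nbhd hfc q.2 hε
  choose O Cs hOo hqO hOsub hCcv hCcl hCf using hOC
  have hcover : Q ⊆ ⋃ q : Q, O q := fun x hx => Set.mem_iUnion.2 ⟨⟨x, hx⟩, hqO _⟩
  obtain ⟨t, ht⟩ := hQcp.elim_finite_subcover O hOo hcover
  set m := t.card with hmdef
  set e : Fin m ≃ {x // x ∈ t} := t.equivFin.symm with hedef
  set w : Fin m → Q := fun k => (e k).1 with hwdef
  set A : Fin m → Set X :=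
    fun k => (D ∩ O (w k)) \ ⋃ j : Fin m, ⋃ (_ : j < k), O (w j) with hAdef
  have hAm : ∀ k, MeasurableSet (A k) := fun k =>
    (hD.inter (hOo (w k)).measurableSet).diff
      (MeasurableSet.iUnion fun j => MeasurableSet.iUnion fun _ => (hOo (w j)).measurableSet)
  have hdisj : ∀ i j : Fin m, i ≠ j → Disjoint (A i) (A j) := by
    have haux : ∀ i j : Fin m, i < j → Disjoint (A i) (A j) := by
      intro i j hlt
      rw [Set.disjoint_left]
      intro x hxi hxj
      exact hxj.2 (Set.mem_iUnion.2 ⟨i, Set.mem_iUnion.2 ⟨hlt, hxi.1.2⟩⟩)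
    intro i j hij
    rcases lt_or_gt_of_ne hij with hlt | hgt
    · exact haux i j hlt
    · exact (haux j i hgt).symm
  have hAD : ⋃ k, A k = D := by
    apply Subset.antisymm
    · exact Set.iUnion_subset fun k x hx => hx.1.1
    · intro x hxD
      have hxQ := hDQ hxD
      have hx2 := ht hxQ
      rw [Set.mem_iUnion₂] at hx2
      obtain ⟨q, hq, hxO⟩ := hx2
      set F : Finset (Fin m) := Finset.univ.filter (fun k => x ∈ O (w k)) with hFdef
      have hFne : F.Nonempty := by
        refine ⟨e.symm ⟨q, hq⟩, ?_⟩
        rw [hFdef, Finset.mem_filter]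
        refine ⟨Finset.mem_univ _, ?_⟩
        have : w (e.symm ⟨q, hq⟩) = q := by
          rw [hwdef]; simp
        rwa [this]
      set k0 := F.min' hFne with hk0def
      have hk0F : k0 ∈ F := F.min'_mem hFne
      rw [hFdef, Finset.mem_filter] at hk0F
      refine Set.mem_iUnion.2 ⟨k0, ⟨⟨hxD, hk0F.2⟩, ?_⟩⟩
      intro hmem
      rw [Set.mem_iUnion] at hmem
      obtain ⟨j, hj⟩ := hmem
      rw [Set.mem_iUnion] at hj
      obtain ⟨hjlt, hxOj⟩ := hj
      have hjF : j ∈ F := by rw [hFdef, Finset.mem_filter]; exact ⟨Finset.mem_univ _, hxOj⟩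
      exact absurd hjlt (not_lt.mpr (F.min'_le j hjF))
  set νs : Fin m → Measure X := fun k => ν.restrict (A k) with hνsdef
  have hνsum : (∑ k, νs k) = ν := by
    ext s hs
    rw [Measure.finset_sum_apply]
    have h1 : ∀ k, νs k s = ν (s ∩ A k) := fun k => Measure.restrict_apply hs
    simp_rw [h1]
    rw [← measure_biUnion_finset
      (fun i _ j _ hij => (hdisj i j hij).mono Set.inter_subset_right Set.inter_subset_right)
      (fun k _ => hs.inter (hAm k))]
    have h2 : ⋃ k ∈ (Finset.univ : Finset (Fin m)), (s ∩ A k) = s ∩ D := by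
      simp only [Finset.mem_univ, Set.iUnion_true]
      rw [← Set.inter_iUnion, hAD]
    rw [h2]
    have h3 := measure_inter_add_diff (μ := ν) s hD
    have h4 : ν (s \ D) = 0 := measure_mono_null (fun y hy => hy.2) hνD
    rw [h4, add_zero] at h3
    exact h3
  obtain ⟨μs, hμsum, heq⟩ := h m νs hνsum
  have hμsle : ∀ k, μs k ≤ μ := by
    intro k
    rw [← hμsum]
    refine Measure.le_iff'.mpr fun s => ?_
    rw [Measure.finset_sum_apply]
    exact Finset.single_le_sum (f := fun j => μs j s) (fun _ _ => zero_le) (Finset.mem_univ k)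
  have hfinμs : ∀ k, IsFiniteMeasure (μs k) := fun k =>
    ⟨lt_of_le_of_lt (Measure.le_iff'.mp (hμsle k) Set.univ) (measure_lt_top μ _)⟩
  have hμsD : ∀ k, (μs k) Dᶜ = 0 := fun k =>
    le_zero_iff.mp ((Measure.le_iff'.mp (hμsle k) Dᶜ).trans_eq hμD)
  have hνsD : ∀ k, (νs k) Dᶜ = 0 := fun k =>
    le_zero_iff.mp ((Measure.le_iff'.mp Measure.restrict_le_self Dᶜ).trans_eq hνD)
  have haemem : ∀ (κ : Measure X), κ Dᶜ = 0 → ∀ᵐ x ∂κ, x ∈ D := by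
    intro κ hκ
    rw [ae_iff]
    simpa [Set.compl_def] using hκ
  obtain ⟨Cf, hCf2⟩ := hQcp.exists_bound_of_continuousOn hfc
  have hfint : ∀ (κ : Measure X) [IsFiniteMeasure κ], κ Dᶜ = 0 → Integrable f κ := by
    intro κ _ hκ
    have hmem := haemem κ hκ
    have hsm : AEStronglyMeasurable f κ := by
      have h1 : AEStronglyMeasurable f (κ.restrict D) := (hfc.mono hDQ).aestronglyMeasurable hD
      rwa [Measure.restrict_eq_self_of_ae_mem hmem] at h1
    exact Integrable.mono' (integrable_const Cf) hsm (hmem.mono fun x hx => hCf2 x (hDQ hx))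
  have hgint : ∀ (g : X → ℝ), Continuous g → ∀ (κ : Measure X) [IsFiniteMeasure κ],
      κ Dᶜ = 0 → Integrable g κ := by
    intro g hg κ _ hκ
    obtain ⟨Cg, hCg⟩ := hQcp.exists_bound_of_continuousOn hg.continuousOn
    exact Integrable.mono' (integrable_const Cg) hg.aestronglyMeasurable
      ((haemem κ hκ).mono fun x hx => hCg x (hDQ hx))
  have key : ∀ k, ∫ x, f x ∂(νs k) ≤ ∫ x, f x ∂(μs k) + 3 * ε * ((νs k) Set.univ).toReal := by
    intro k
    haveI := hfinμs k
    by_cases hA0 : ν (A k) = 0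
    · have hν0 : νs k = 0 := Measure.restrict_eq_zero.mpr hA0
      have hμ0 : μs k = 0 := by
        have h1 := heq k 0 1
        rw [hν0] at h1
        simp only [integral_zero_measure, ContinuousLinearMap.zero_apply, zero_add,
          integral_const, smul_eq_mul, mul_one] at h1
        have h2 : (μs k) Set.univ = 0 := by
          rcases (ENNReal.toReal_eq_zero_iff _).mp h1 with h | h
          · exact h
          · exact absurd h (measure_ne_top _ _)
        exact Measure.measure_univ_eq_zero.mp h2
      rw [hν0, hμ0]
      simp
    · set K : Set X := Q ∩ Cs (w k) with hKdef
      have hKcp : IsCompact K := hQcp.inter_right (hCcl (w k))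
      have hKcv : Convex ℝ K := hQcv.inter (hCcv (w k))
      have hAK : A k ⊆ K := fun x hx => ⟨hDQ hx.1.1, hOsub (w k) hx.1.2⟩
      have hνsK : (νs k) Kᶜ = 0 := by
        have h1 : (νs k) (A k)ᶜ = 0 := by
          rw [hνsdef]
          rw [Measure.restrict_apply (hAm k).compl, Set.compl_inter_self]
          exact measure_empty
        exact measure_mono_null (Set.compl_subset_compl.mpr hAK) h1
      have hνs0 : νs k ≠ 0 := fun hc => hA0 (Measure.restrict_eq_zero.mp hc)
      obtain ⟨b, hbK, hbar⟩ := cfm_exists_weak_barycenter hKcp hKcv (νs k) hνsK hνs0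
      obtain ⟨a, c, hmin, hminb⟩ := cfm_affine_minorant hQcp hQcv hfc hfcv hbK.1 hε
      set mass := ((νs k) Set.univ).toReal with hmassdef
      have hmass0 : 0 ≤ mass := ENNReal.toReal_nonneg
      have hub : ∀ᵐ y ∂(νs k), f y ≤ f (w k) + ε := by
        have hres : ∀ᵐ y ∂(νs k), y ∈ A k := by
          rw [hνsdef]; exact ae_restrict_mem (hAm k)
        filter_upwards [hres] with y hy
        have hyCQ : y ∈ Cs (w k) ∩ Q := ⟨hOsub (w k) hy.1.2, hDQ hy.1.1⟩
        have h1 := hCf (w k) y hyCQ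
        linarith [(abs_lt.mp h1).2]
      have hi : ∫ x, f x ∂(νs k) ≤ (f (w k) + ε) * mass := by
        have h1 := integral_mono_ae (hfint (νs k) (hνsD k))
          (integrable_const (f (w k) + ε)) hub
        rwa [integral_const, smul_eq_mul, mul_comm] at h1
      have hii : f (w k) ≤ f b + ε := by
        have h1 := hCf (w k) b ⟨hbK.2, hbK.1⟩
        linarith [(abs_lt.mp h1).1]
      have hiv : ∫ x, (a x + c) ∂(νs k) = (a b + c) * mass := by
        rw [integral_add (hgint a a.continuous (νs k) (hνsD k)) (integrable_const c),
          hbar a, integral_const, smul_eq_mul, measureReal_def]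
        ring
      have hv : ∫ x, (a x + c) ∂(μs k) = (a b + c) * mass := by rw [heq k a c, hiv]
      have hvi : ∫ x, (a x + c) ∂(μs k) ≤ ∫ x, f x ∂(μs k) := by
        refine integral_mono_ae
          (hgint (fun x => a x + c) (a.continuous.add continuous_const) (μs k) (hμsD k))
          (hfint (μs k) (hμsD k)) ?_
        filter_upwards [haemem (μs k) (hμsD k)] with x hx
        exact hmin x (hDQ hx)
      have hvii : (a b + c) * mass ≤ ∫ x, f x ∂(μs k) := hv ▸ hvi
      have hbound : f (w k) + ε ≤ (a b + c) + 3 * ε := by linarith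
      calc ∫ x, f x ∂(νs k) ≤ (f (w k) + ε) * mass := hi
        _ ≤ ((a b + c) + 3 * ε) * mass := mul_le_mul_of_nonneg_right hbound hmass0
        _ = (a b + c) * mass + 3 * ε * mass := by ring
        _ ≤ ∫ x, f x ∂(μs k) + 3 * ε * mass := by linarith
  have hsum1 : ∫ x, f x ∂ν = ∑ k, ∫ x, f x ∂(νs k) := by
    conv_lhs => rw [← hνsum]
    exact integral_finset_sum_measure (fun k _ => hfint (νs k) (hνsD k))
  have hsum2 : ∑ k, ∫ x, f x ∂(μs k) = ∫ x, f x ∂μ := by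
    conv_rhs => rw [← hμsum]
    exact (integral_finset_sum_measure (fun k _ => by
      haveI := hfinμs k; exact hfint (μs k) (hμsD k))).symm
  have hmasses : ∑ k, ((νs k) Set.univ).toReal = (ν Set.univ).toReal := by
    have h1 : (∑ k, (νs k) Set.univ) = ν Set.univ := by
      rw [← Measure.finset_sum_apply, hνsum]
    calc ∑ k, ((νs k) Set.univ).toReal
        = (∑ k, (νs k) Set.univ).toReal :=
          (ENNReal.toReal_sum (fun k _ => measure_ne_top _ _)).symm
      _ = (ν Set.univ).toReal := by rw [h1]
  calc ∫ x, f x ∂ν = ∑ k, ∫ x, f x ∂(νs k) := hsum1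
    _ ≤ ∑ k, (∫ x, f x ∂(μs k) + 3 * ε * ((νs k) Set.univ).toReal) :=
        Finset.sum_le_sum (fun k _ => key k)
    _ = ∫ x, f x ∂μ + 3 * ε * (ν Set.univ).toReal := by
        rw [Finset.sum_add_distrib, hsum2, ← Finset.mul_sum, hmasses]

theorem cartier_fell_meyer_sufficiency {X : Type*} [AddCommGroup X] [Module ℝ X]
    [TopologicalSpace X] [IsTopologicalAddGroup X] [ContinuousSMul ℝ X]
    [LocallyConvexSpace ℝ X] [MeasurableSpace X] [BorelSpace X]
    (Q : Set X) (hQcp : IsCompact Q) (hQcv : Convex ℝ Q)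
    (μ ν : Measure X) [IsFiniteMeasure μ] [IsFiniteMeasure ν]
    (hμQ : μ Qᶜ = 0) (hνQ : ν Qᶜ = 0)
    (h : AffMaj μ ν)
    (f : X → ℝ) (hfc : ContinuousOn f Q) (hfcv : ConvexOn ℝ Q f) :
    ∫ x, f x ∂ν ≤ ∫ x, f x ∂μ := by
  refine le_of_forall_pos_le_add ?_
  intro ε hε
  set Cν := (ν Set.univ).toReal with hCdef
  have hC0 : 0 ≤ Cν := ENNReal.toReal_nonneg
  have hδ : 0 < ε / (3 * (Cν + 1)) := by positivity
  have h1 := cfm_estimate Q hQcp hQcv μ ν hμQ hνQ h f hfc hfcv hδ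
  have h2 : 3 * (ε / (3 * (Cν + 1))) * Cν ≤ ε := by
    have hpos : (0:ℝ) < 3 * (Cν + 1) := by positivity
    have hd : ε / (3 * (Cν + 1)) * (3 * (Cν + 1)) = ε := div_mul_cancel₀ _ (ne_of_gt hpos)
    nlinarith [hδ, hC0]
  linarith
end

section
/- In the 'if' direction of the decomposition theorem: if for every decomposition g = g_1 + … + g_N into positive linear functionals there exists a decomposition f = f_1 + … + f_N into positive linear functionals with f_k(h_k) ≥ g_k(h_k) for all h_k in cones H_k, then f(h_1 ∨ … ∨ h_N) ≥ g(h_1 ∨ … ∨ h_N) for all h_k ∈ H_k, using the Riesz decomposition property applied to g evaluated at the supremum. -/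
open Finset

section Aux

variable {X : Type*} [AddCommGroup X] [Lattice X]
    [CovariantClass X X (· + ·) (· ≤ ·)] [Module ℝ X]

private lemma pos_mono (g : X →ₗ[ℝ] ℝ) (hg : ∀ x : X, 0 ≤ x → 0 ≤ g x)
    {x y : X} (hxy : x ≤ y) : g x ≤ g y := by
  have := hg (y - x) (by simp [hxy])
  rw [map_sub] at this; linarith

private lemma smul_mono' (hsmul : ∀ (c : ℝ) (x : X), 0 ≤ c → 0 ≤ x → 0 ≤ c • x)
    {c : ℝ} (hc : 0 ≤ c) {x y : X} (hxy : x ≤ y) : c • x ≤ c • y := by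
  rw [← sub_nonneg, ← smul_sub]
  exact hsmul c (y - x) hc (by simp [hxy])

private lemma smul_inf' (hsmul : ∀ (c : ℝ) (x : X), 0 ≤ c → 0 ≤ x → 0 ≤ c • x)
    {c : ℝ} (hc : 0 < c) (u v : X) : c • (u ⊓ v) = (c • u) ⊓ (c • v) := by
  apply le_antisymm
  · exact le_inf (smul_mono' hsmul hc.le inf_le_left) (smul_mono' hsmul hc.le inf_le_right)
  · set w := (c • u) ⊓ (c • v) with hw
    have h1 : c⁻¹ • w ≤ u := by
      have := smul_mono' hsmul (c := c⁻¹) (by positivity) (inf_le_left (a := c • u) (b := c • v))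
      rwa [smul_smul, inv_mul_cancel₀ hc.ne', one_smul] at this
    have h2 : c⁻¹ • w ≤ v := by
      have := smul_mono' hsmul (c := c⁻¹) (by positivity) (inf_le_right (a := c • u) (b := c • v))
      rwa [smul_smul, inv_mul_cancel₀ hc.ne', one_smul] at this
    have := smul_mono' hsmul hc.le (le_inf h1 h2)
    rwa [smul_smul, mul_inv_cancel₀ hc.ne', one_smul] at this

-- key lattice inequality: for 0 ≤ a, 0 ≤ b, 0 ≤ c : (a+b) ⊓ c ≤ a ⊓ c + b ⊓ c
private lemma inf_add_key {a b c : X} (ha : 0 ≤ a) (hb : 0 ≤ b) (hc : 0 ≤ c) :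
    (a + b) ⊓ c ≤ a ⊓ c + b ⊓ c := by
  have h : a ⊓ c + b ⊓ c = ((a + b) ⊓ (a + c)) ⊓ ((c + b) ⊓ (c + c)) := by
    rw [add_inf, inf_add, inf_add]
    ac_rfl
  rw [h]
  refine le_inf (le_inf ?_ ?_) (le_inf ?_ ?_)
  · exact inf_le_left
  · exact inf_le_right.trans (le_add_of_nonneg_left ha)
  · exact inf_le_right.trans (le_add_of_nonneg_right hb)
  · exact inf_le_right.trans (le_add_of_nonneg_right hc)
end Aux

section Comp

variable {X : Type*} [AddCommGroup X] [Lattice X]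
    [CovariantClass X X (· + ·) (· ≤ ·)] [Module ℝ X]

private lemma component_exists (hsmul : ∀ (c : ℝ) (x : X), 0 ≤ c → 0 ≤ x → 0 ≤ c • x)
    (g : X →ₗ[ℝ] ℝ) (hg : ∀ x : X, 0 ≤ x → 0 ≤ g x) (r : X) (hr : 0 ≤ r) :
    ∃ G : X →ₗ[ℝ] ℝ, (∀ x, 0 ≤ x → 0 ≤ G x) ∧ (∀ x, 0 ≤ x → G x ≤ g x) ∧
      G r = g r ∧ (∀ s : X, 0 ≤ s → g (s ⊓ r) = 0 → G s = 0) := by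
  classical
  set S : X → Set ℝ := fun x => (fun c : ℝ => g (x ⊓ c • r)) '' Set.Ici 0 with hS
  set φ : X → ℝ := fun x => sSup (S x) with hφ
  have hmem : ∀ x : X, ∀ c : ℝ, 0 ≤ c → g (x ⊓ c • r) ∈ S x := by
    intro x c hc; exact ⟨c, hc, rfl⟩
  have hne : ∀ x : X, (S x).Nonempty := fun x => ⟨_, hmem x 0 le_rfl⟩
  have hbdd : ∀ x : X, 0 ≤ x → BddAbove (S x) := by
    intro x hx
    refine ⟨g x, ?_⟩
    rintro z ⟨c, hc, rfl⟩
    exact pos_mono g hg inf_le_left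
  -- φ ≤ g on the cone
  have hle : ∀ x : X, 0 ≤ x → φ x ≤ g x := by
    intro x hx
    refine csSup_le (hne x) ?_
    rintro z ⟨c, hc, rfl⟩
    exact pos_mono g hg inf_le_left
  -- φ ≥ 0 on the cone
  have hnn : ∀ x : X, 0 ≤ x → 0 ≤ φ x := by
    intro x hx
    have h0 : (0 : ℝ) ∈ S x := by
      have h00 : x ⊓ (0 : X) = 0 := inf_eq_right.mpr hx
      simpa [zero_smul, h00] using hmem x 0 le_rfl
    exact le_csSup (hbdd x hx) h0
  -- additivity on the cone
  have hadd : ∀ x y : X, 0 ≤ x → 0 ≤ y → φ (x + y) = φ x + φ y := by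
    intro x y hx hy
    apply le_antisymm
    · refine csSup_le (hne _) ?_
      rintro z ⟨c, hc, rfl⟩
      have hcr : (0:X) ≤ c • r := hsmul c r hc hr
      have h1 : (x + y) ⊓ c • r ≤ x ⊓ c • r + y ⊓ c • r := inf_add_key hx hy hcr
      calc g ((x + y) ⊓ c • r) ≤ g (x ⊓ c • r + y ⊓ c • r) := pos_mono g hg h1
        _ = g (x ⊓ c • r) + g (y ⊓ c • r) := map_add g _ _
        _ ≤ φ x + φ y := add_le_add (le_csSup (hbdd x hx) (hmem x c hc))
            (le_csSup (hbdd y hy) (hmem y c hc))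
    · rw [← sub_nonneg]
      have key : ∀ z ∈ S x, ∀ w ∈ S y, z + w ≤ φ (x + y) := by
        rintro z ⟨a, (ha : (0:ℝ) ≤ a), rfl⟩ w ⟨b, (hb : (0:ℝ) ≤ b), rfl⟩
        have h1 : x ⊓ a • r + y ⊓ b • r ≤ (x + y) ⊓ (a + b) • r := by
          refine le_inf (add_le_add inf_le_left inf_le_left) ?_
          rw [add_smul]
          exact add_le_add inf_le_right inf_le_right
        calc g (x ⊓ a • r) + g (y ⊓ b • r) = g (x ⊓ a • r + y ⊓ b • r) := (map_add g _ _).symm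
          _ ≤ g ((x + y) ⊓ (a + b) • r) := pos_mono g hg h1
          _ ≤ φ (x + y) := le_csSup (hbdd _ (add_nonneg hx hy)) (hmem _ (a + b) (by linarith))
      have h2 : φ x ≤ φ (x + y) - φ y := by
        refine csSup_le (hne x) fun z hz => ?_
        rw [le_sub_iff_add_le]
        have h3 : φ y ≤ φ (x + y) - z := by
          refine csSup_le (hne y) fun w hw => ?_
          have := key z hz w hw; linarith
        linarith
      linarith
  -- positive homogeneity on the cone
  have hzero : φ 0 = 0 := by
    apply le_antisymm _ (hnn 0 le_rfl)
    refine csSup_le (hne 0) ?_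
    rintro z ⟨c, (hc : (0:ℝ) ≤ c), rfl⟩
    have : (0 : X) ⊓ c • r = 0 := inf_eq_left.mpr (hsmul c r hc hr)
    simp [this]
  have hhom : ∀ (c : ℝ) (x : X), 0 ≤ c → 0 ≤ x → φ (c • x) = c * φ x := by
    intro c x hc hx
    rcases eq_or_lt_of_le hc with rfl | hc
    · simp [hzero]
    apply le_antisymm
    · refine csSup_le (hne _) ?_
      rintro z ⟨a, (ha : (0:ℝ) ≤ a), rfl⟩
      show g ((c • x) ⊓ a • r) ≤ c * φ x
      have h1 : (c • x) ⊓ a • r = c • (x ⊓ (a / c) • r) := by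
        rw [smul_inf' hsmul hc, smul_smul, mul_div_cancel₀ _ hc.ne']
      rw [h1, map_smul, smul_eq_mul]
      have := le_csSup (hbdd x hx) (hmem x (a / c) (by positivity))
      nlinarith
    · rw [mul_comm, ← le_div_iff₀ hc]
      refine csSup_le (hne x) ?_
      rintro z ⟨a, (ha : (0:ℝ) ≤ a), rfl⟩
      show g (x ⊓ a • r) ≤ φ (c • x) / c
      rw [le_div_iff₀ hc, mul_comm]
      have h1 : c • (x ⊓ a • r) = (c • x) ⊓ ((c * a) • r) := by
        rw [smul_inf' hsmul hc, smul_smul]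
      calc c * g (x ⊓ a • r) = g (c • (x ⊓ a • r)) := by rw [map_smul, smul_eq_mul]
        _ = g ((c • x) ⊓ ((c * a) • r)) := by rw [h1]
        _ ≤ φ (c • x) := le_csSup (hbdd _ (hsmul c x hc.le hx)) (hmem _ _ (by positivity))
  -- representation independence
  have key : ∀ a b a' b' : X, 0 ≤ a → 0 ≤ b → 0 ≤ a' → 0 ≤ b' → a - b = a' - b' →
      φ a - φ b = φ a' - φ b' := by
    intro a b a' b' ha hb ha' hb' hE
    have h1 : a + b' = a' + b := by
      rw [← sub_eq_sub_iff_add_eq_add]; exact hE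
    have h2 := hadd a b' ha hb'
    have h3 := hadd a' b ha' hb
    rw [h1, h3] at h2
    linarith
  set G0 : X → ℝ := fun x => φ (x⁺) - φ (x⁻) with hG0
  have hGval : ∀ x : X, 0 ≤ x → G0 x = φ x := by
    intro x hx
    have h := key (x⁺) (x⁻) x 0 (posPart_nonneg x) (negPart_nonneg x) hx le_rfl
      (by rw [posPart_sub_negPart, sub_zero])
    simp only [hG0]
    rw [h, hzero, sub_zero]
  have hGadd : ∀ x y : X, G0 (x + y) = G0 x + G0 y := by
    intro x y
    have h1 : x + y = (x⁺ + y⁺) - (x⁻ + y⁻) := by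
      have h : (x⁺ + y⁺) - (x⁻ + y⁻) = (x⁺ - x⁻) + (y⁺ - y⁻) := by abel
      rw [h, posPart_sub_negPart, posPart_sub_negPart]
    have h2 := key ((x+y)⁺) ((x+y)⁻) (x⁺ + y⁺) (x⁻ + y⁻) (posPart_nonneg _) (negPart_nonneg _)
      (add_nonneg (posPart_nonneg _) (posPart_nonneg _))
      (add_nonneg (negPart_nonneg _) (negPart_nonneg _))
      (by rw [posPart_sub_negPart, h1])
    have h3 := hadd (x⁺) (y⁺) (posPart_nonneg _) (posPart_nonneg _)
    have h4 := hadd (x⁻) (y⁻) (negPart_nonneg _) (negPart_nonneg _)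
    simp only [hG0]
    linarith
  have hGsmul : ∀ (c : ℝ) (x : X), G0 (c • x) = c * G0 x := by
    intro c x
    rcases le_or_gt 0 c with hc | hc
    · have h1 : c • x = (c • x⁺) - (c • x⁻) := by rw [← smul_sub, posPart_sub_negPart]
      have h2 := key ((c • x)⁺) ((c • x)⁻) (c • x⁺) (c • x⁻) (posPart_nonneg _)
        (negPart_nonneg _) (hsmul c _ hc (posPart_nonneg _)) (hsmul c _ hc (negPart_nonneg _))
        (by rw [posPart_sub_negPart, ← h1])
      have h3 := hhom c (x⁺) hc (posPart_nonneg _)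
      have h4 := hhom c (x⁻) hc (negPart_nonneg _)
      simp only [hG0]
      linarith
    · have hc' : (0:ℝ) ≤ -c := by linarith
      have h1 : c • x = ((-c) • x⁻) - ((-c) • x⁺) := by
        have h := posPart_sub_negPart x
        conv_lhs => rw [← h]
        module
      have h2 := key ((c • x)⁺) ((c • x)⁻) ((-c) • x⁻) ((-c) • x⁺) (posPart_nonneg _)
        (negPart_nonneg _) (hsmul _ _ hc' (negPart_nonneg _)) (hsmul _ _ hc' (posPart_nonneg _))
        (by rw [posPart_sub_negPart, ← h1])
      have h3 := hhom (-c) (x⁻) hc' (negPart_nonneg _)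
      have h4 := hhom (-c) (x⁺) hc' (posPart_nonneg _)
      simp only [hG0]
      linarith
  have hrval : φ r = g r := by
    apply le_antisymm (hle r hr)
    have : g (r ⊓ (1:ℝ) • r) = g r := by rw [one_smul, inf_idem]
    exact this ▸ le_csSup (hbdd r hr) (hmem r 1 zero_le_one)
  refine ⟨{ toFun := G0, map_add' := hGadd,
            map_smul' := fun c x => by simpa using hGsmul c x }, ?_, ?_, ?_, ?_⟩
  · intro x hx
    rw [LinearMap.coe_mk, AddHom.coe_mk, hGval x hx]
    exact hnn x hx
  · intro x hx
    rw [LinearMap.coe_mk, AddHom.coe_mk, hGval x hx]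
    exact hle x hx
  · rw [LinearMap.coe_mk, AddHom.coe_mk, hGval r hr]
    exact hrval
  · intro s hs h0
    rw [LinearMap.coe_mk, AddHom.coe_mk, hGval s hs]
    apply le_antisymm _ (hnn s hs)
    refine csSup_le (hne s) ?_
    rintro z ⟨c, (hc : (0:ℝ) ≤ c), rfl⟩
    show g (s ⊓ c • r) ≤ 0
    rcases le_or_gt c 1 with h1 | h1
    · have hcr : c • r ≤ r := by
        have := hsmul (1 - c) r (by linarith) hr
        rw [sub_smul, one_smul, sub_nonneg] at this
        exact this
      calc g (s ⊓ c • r) ≤ g (s ⊓ r) := pos_mono g hg (inf_le_inf_left s hcr)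
        _ = 0 := h0
    · have hsc : s ≤ c • s := by
        have := hsmul (c - 1) s (by linarith) hs
        rw [sub_smul, one_smul, sub_nonneg] at this
        exact this
      have h2 : s ⊓ c • r ≤ c • (s ⊓ r) := by
        rw [smul_inf' hsmul (by linarith)]
        exact inf_le_inf_right _ hsc
      calc g (s ⊓ c • r) ≤ g (c • (s ⊓ r)) := pos_mono g hg h2
        _ = c * g (s ⊓ r) := by rw [map_smul, smul_eq_mul]
        _ = 0 := by rw [h0, mul_zero]

end Comp

section Decomp

variable {X : Type*} [AddCommGroup X] [Lattice X]
    [CovariantClass X X (· + ·) (· ≤ ·)] [Module ℝ X]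

private lemma decomp_exists (hsmul : ∀ (c : ℝ) (x : X), 0 ≤ c → 0 ≤ x → 0 ≤ c • x)
    {ι : Type*} [DecidableEq ι] (q : ι → X) (hq : ∀ k, 0 ≤ q k)
    (s : Finset ι) (hs : s.Nonempty) :
    ∀ g : X →ₗ[ℝ] ℝ, (∀ x : X, 0 ≤ x → 0 ≤ g x) → g (s.inf' hs q) = 0 →
      ∃ gs : ι → (X →ₗ[ℝ] ℝ), (∀ k, ∀ x : X, 0 ≤ x → 0 ≤ gs k x) ∧
        (∑ k ∈ s, gs k) = g ∧ ∀ k ∈ s, gs k (q k) = 0 := by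
  induction hs using Finset.Nonempty.cons_induction with
  | singleton a =>
    intro g hg h0
    refine ⟨fun _ => g, fun k => hg, by simp, ?_⟩
    intro k hk
    rw [Finset.mem_singleton] at hk
    subst hk
    simpa using h0
  | cons a s ha hs ih =>
    intro g hg h0
    rw [Finset.inf'_cons hs] at h0
    set r := s.inf' hs q with hrdef
    have hr : 0 ≤ r := Finset.le_inf' hs q fun k _ => hq k
    obtain ⟨G, hGpos, hGle, hGr, hGzero⟩ := component_exists hsmul g hg r hr
    have hG0 : G (q a) = 0 := hGzero (q a) (hq a) h0
    have hg'pos : ∀ x : X, 0 ≤ x → 0 ≤ (g - G) x := by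
      intro x hx
      simp only [LinearMap.sub_apply, sub_nonneg]
      exact hGle x hx
    have hg'r : (g - G) r = 0 := by
      simp only [LinearMap.sub_apply, hGr, sub_self]
    obtain ⟨gs', hgs'pos, hgs'sum, hgs'zero⟩ := ih (g - G) hg'pos hg'r
    refine ⟨Function.update gs' a G, ?_, ?_, ?_⟩
    · intro k x hx
      rcases eq_or_ne k a with rfl | hk
      · simpa [Function.update_self] using hGpos x hx
      · simpa [Function.update_of_ne hk] using hgs'pos k x hx
    · rw [Finset.sum_cons]
      have h1 : ∑ k ∈ s, Function.update gs' a G k = ∑ k ∈ s, gs' k :=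
        Finset.sum_congr rfl fun k hk =>
          Function.update_of_ne (ne_of_mem_of_not_mem hk ha) _ _
      rw [Function.update_self, h1, hgs'sum]
      abel
    · intro k hk
      rw [Finset.mem_cons] at hk
      rcases hk with rfl | hk
      · rw [Function.update_self]; exact hG0
      · rw [Function.update_of_ne (ne_of_mem_of_not_mem hk ha)]
        exact hgs'zero k hk

end Decomp

theorem decomposition_theorem_if_direction {X : Type*} [AddCommGroup X] [Lattice X]
    [CovariantClass X X (· + ·) (· ≤ ·)] [Module ℝ X]
    (hsmul : ∀ (c : ℝ) (x : X), 0 ≤ c → 0 ≤ x → 0 ≤ c • x)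
    {ι : Type*} [Fintype ι] [Nonempty ι]
    (H : ι → Set X) (hH : ∀ k, ∀ c : ℝ, 0 ≤ c → ∀ x ∈ H k, c • x ∈ H k)
    (f g : X →ₗ[ℝ] ℝ)
    (hf : ∀ x : X, 0 ≤ x → 0 ≤ f x) (hg : ∀ x : X, 0 ≤ x → 0 ≤ g x)
    (hdec : ∀ gs : ι → (X →ₗ[ℝ] ℝ), (∀ k, ∀ x : X, 0 ≤ x → 0 ≤ gs k x) → (∑ k, gs k) = g →
      ∃ fs : ι → (X →ₗ[ℝ] ℝ), (∀ k, ∀ x : X, 0 ≤ x → 0 ≤ fs k x) ∧ (∑ k, fs k) = f ∧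
        ∀ k, ∀ x ∈ H k, gs k x ≤ fs k x) :
    ∀ h : ι → X, (∀ k, h k ∈ H k) →
      g (Finset.univ.sup' Finset.univ_nonempty h) ≤
      f (Finset.univ.sup' Finset.univ_nonempty h) := by
  classical
  intro h hh
  set t := Finset.univ.sup' Finset.univ_nonempty h with ht
  set q : ι → X := fun k => t - h k with hqdef
  have hq : ∀ k, 0 ≤ q k := fun k => by
    simp only [hqdef, sub_nonneg]
    exact Finset.le_sup' h (Finset.mem_univ k)
  have hinf : Finset.univ.inf' Finset.univ_nonempty q = 0 := by
    apply le_antisymm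
    · have h1 : t ≤ t - Finset.univ.inf' Finset.univ_nonempty q := by
        rw [ht]
        refine Finset.sup'_le _ _ fun k _ => ?_
        rw [le_sub_iff_add_le, ← le_sub_iff_add_le']
        exact Finset.inf'_le q (Finset.mem_univ k)
      rwa [le_sub_iff_add_le, ← le_sub_iff_add_le', sub_self] at h1
    · exact Finset.le_inf' _ q fun k _ => hq k
  have h0 : g (Finset.univ.inf' Finset.univ_nonempty q) = 0 := by rw [hinf, map_zero]
  obtain ⟨gs, hgspos, hgssum, hgszero⟩ :=
    decomp_exists hsmul q hq Finset.univ Finset.univ_nonempty g hg h0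
  obtain ⟨fs, hfspos, hfssum, hfsle⟩ := hdec gs hgspos hgssum
  have e1 : g t = ∑ k, gs k (h k) := by
    rw [← hgssum]
    simp only [LinearMap.coe_sum, Finset.sum_apply]
    refine Finset.sum_congr rfl fun k _ => ?_
    have : gs k t - gs k (h k) = gs k (q k) := by rw [hqdef, ← map_sub]
    have h2 := hgszero k (Finset.mem_univ k)
    linarith [this ▸ h2]
  have e2 : f t = ∑ k, fs k t := by
    rw [← hfssum]; simp
  rw [e1, e2]
  refine Finset.sum_le_sum fun k _ => ?_
  calc gs k (h k) ≤ fs k (h k) := hfsle k (h k) (hh k)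
    _ ≤ fs k t := by
      have := hfspos k (q k) (hq k)
      rw [hqdef, map_sub] at this
      linarith
end
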